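/- Let g, h : (1,∞) → ℝ be monotone nondecreasing functions such that g(r) ≤ h(r) for all r outside an exceptional set E ⊂ (1,∞) of finite logarithmic measure. Then for any d > 1 there exists r₀ > 1 such that g(r) ≤ h(d·r) for all r > r₀. -/

import Mathlib

open MeasureTheory

/-- Gundersen–Laine growth lemma, logarithmic measure version: if `g ≤ h` outside an
exceptional set `E ⊂ (1,∞)` of finite logarithmic measure, then for `d > 1`,
`g r ≤ h (d·r)` for all sufficiently large `r`. -/
theorem growth_comparison_log (g h : ℝ → ℝ)
    (hg : ∀ x y : ℝ, 1 < x → x ≤ y → g x ≤ g y)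
    (hh : ∀ x y : ℝ, 1 < x → x ≤ y → h x ≤ h y)
    (E : Set ℝ) (hE : E ⊆ Set.Ioi 1)
    (hEm : ∫⁻ t in E, ENNReal.ofReal (1 / t) < ⊤)
    (hle : ∀ r > (1:ℝ), r ∉ E → g r ≤ h r) :
    ∀ d > (1:ℝ), ∃ r₀ > (1:ℝ), ∀ r > r₀, g r ≤ h (d * r) := by
  intro d hd
  set f : ℝ → ENNReal := fun t => ENNReal.ofReal (1 / t) with hfdef
  have hfm : Measurable f := by
    apply ENNReal.measurable_ofReal.comp
    exact measurable_const.div measurable_id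
  set F := toMeasurable volume E with hFdef
  have hFm : MeasurableSet F := measurableSet_toMeasurable _ _
  have hEF : E ⊆ F := subset_toMeasurable _ _
  have hrestrict : volume.restrict F = volume.restrict E :=
    Measure.restrict_toMeasurable_of_sFinite E
  set μ := volume.withDensity f with hμdef
  have hμF : μ F < ⊤ := by
    rw [hμdef, withDensity_apply _ hFm, hrestrict]
    exact hEm
  -- tail measure tends to zero
  have htail : Filter.Tendsto (fun n : ℕ => μ (F ∩ Set.Ioi (n:ℝ)))
      Filter.atTop (nhds 0) := by
    have h0 : (⋂ n : ℕ, F ∩ Set.Ioi (n:ℝ)) = ∅ := by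
      rw [Set.eq_empty_iff_forall_notMem]
      intro x hx
      simp only [Set.mem_iInter, Set.mem_inter_iff, Set.mem_Ioi] at hx
      obtain ⟨n, hn⟩ := exists_nat_gt x
      exact absurd (hx n).2 (not_lt_of_gt hn)
    have h := MeasureTheory.tendsto_measure_iInter_atTop (μ := μ)
      (s := fun n : ℕ => F ∩ Set.Ioi (n:ℝ))
      (fun n => (hFm.inter measurableSet_Ioi).nullMeasurableSet)
      (fun m n hmn => Set.inter_subset_inter_right _
        (Set.Ioi_subset_Ioi (by exact_mod_cast hmn)))
      ⟨0, ((measure_mono Set.inter_subset_left).trans_lt hμF).ne⟩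
    rw [h0] at h
    simpa [Function.comp_def] using h
  have hlogd : 0 < Real.log d := Real.log_pos hd
  have hN : ∃ N : ℕ, μ (F ∩ Set.Ioi (N:ℝ)) < ENNReal.ofReal (Real.log d) := by
    have := htail.eventually_lt_const (ENNReal.ofReal_pos.mpr hlogd)
    exact this.exists
  obtain ⟨N, hNlt⟩ := hN
  have hN0 : (0:ℝ) ≤ (N:ℝ) := Nat.cast_nonneg N
  refine ⟨(N:ℝ) + 2, by linarith, ?_⟩
  intro r hr
  have hr1 : 1 < r := by linarith
  have hr0 : 0 < r := by linarith
  have hrd : r ≤ d * r := le_mul_of_one_le_left hr0.le hd.le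
  by_cases hall : ∀ s ∈ Set.Icc r (d*r), s ∈ E
  · exfalso
    have hsub : Set.Icc r (d*r) ⊆ F ∩ Set.Ioi (N:ℝ) := by
      intro s hs
      refine ⟨hEF (hall s hs), ?_⟩
      have : (N:ℝ) < r := by linarith
      exact lt_of_lt_of_le this hs.1
    have hcont : ContinuousOn (fun t : ℝ => 1 / t) (Set.Icc r (d*r)) := by
      apply ContinuousOn.div continuousOn_const continuousOn_id
      intro x hx
      have : 0 < x := lt_of_lt_of_le hr0 hx.1
      exact this.ne'
    have hint : IntegrableOn (fun t : ℝ => 1 / t) (Set.Icc r (d*r)) volume :=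
      hcont.integrableOn_Icc
    have hIcc : μ (Set.Icc r (d*r)) = ENNReal.ofReal (Real.log d) := by
      rw [hμdef, withDensity_apply _ measurableSet_Icc]
      have h1 : (∫⁻ t in Set.Icc r (d*r), f t) =
          ENNReal.ofReal (∫ t in Set.Icc r (d*r), 1 / t) := by
        rw [← MeasureTheory.ofReal_integral_eq_lintegral_ofReal hint]
        filter_upwards [ae_restrict_mem measurableSet_Icc] with x hx
        exact le_of_lt (div_pos one_pos (lt_of_lt_of_le hr0 hx.1))
      rw [h1]
      congr 1
      rw [MeasureTheory.integral_Icc_eq_integral_Ioc,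
        ← intervalIntegral.integral_of_le hrd]
      rw [integral_one_div (by
        rw [Set.uIcc_of_le hrd]
        intro h0
        exact absurd h0.1 (not_le.mpr hr0))]
      rw [mul_div_assoc, div_self hr0.ne', mul_one]
    have hle' : μ (Set.Icc r (d*r)) ≤ μ (F ∩ Set.Ioi (N:ℝ)) := measure_mono hsub
    rw [hIcc] at hle'
    exact absurd hNlt (not_lt.mpr hle')
  · push_neg at hall
    obtain ⟨s, hs, hsE⟩ := hall
    have hs1 : 1 < s := lt_of_lt_of_le hr1 hs.1
    calc g r ≤ g s := hg r s hr1 hs.1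
      _ ≤ h s := hle s hs1 hsE
      _ ≤ h (d*r) := hh s (d*r) hs1 hs.2
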